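/- Let n ≥ 1 be an integer, m ∈ (0,1), and B > 0. For every twice continuously differentiable Ψ : ℝⁿ → ℝ and every x ∈ ℝⁿ, the function v(x) := Ψ(x)/(B+|x|²) satisfies (Lv)(x) = (B+|x|²)^{−1} · [ (B+|x|²)·ΔΨ(x) − (2/(1−m))·x·∇Ψ(x) ]; that is, the operator L intertwines with the operator HΨ := (B+|x|²)ΔΨ − (2/(1−m)) x·∇Ψ under multiplication by (B+|x|²)^{−1}. -/

import Mathlib

open scoped BigOperators

noncomputable section

/-- The `i`-th standard basis vector of `ℝⁿ`. -/
def stdBasis (n : ℕ) (i : Fin n) : EuclideanSpace ℝ (Fin n) :=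
  EuclideanSpace.single i 1

/-- The Laplacian (sum of second partial derivatives) of `f : ℝⁿ → ℝ`. -/
def lap (n : ℕ) (f : EuclideanSpace ℝ (Fin n) → ℝ) (x : EuclideanSpace ℝ (Fin n)) : ℝ :=
  ∑ i : Fin n, fderiv ℝ (fun y => fderiv ℝ f y (stdBasis n i)) x (stdBasis n i)

/-- `x · ∇f x`. -/
def gradDot (n : ℕ) (f : EuclideanSpace ℝ (Fin n) → ℝ) (x : EuclideanSpace ℝ (Fin n)) : ℝ :=
  ∑ i : Fin n, x i * fderiv ℝ f x (stdBasis n i)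

/-- The linearized operator
`(Lv)(x) = (B+|x|²)Δv + (2(1-2m)/(1-m)) x·∇v + 2(n - (2/(1-m))|x|²/(B+|x|²)) v`. -/
def Lop (n : ℕ) (m B : ℝ) (v : EuclideanSpace ℝ (Fin n) → ℝ)
    (x : EuclideanSpace ℝ (Fin n)) : ℝ :=
  (B + ‖x‖ ^ 2) * lap n v x + (2 * (1 - 2 * m) / (1 - m)) * gradDot n v x +
    2 * ((n : ℝ) - (2 / (1 - m)) * ‖x‖ ^ 2 / (B + ‖x‖ ^ 2)) * v x

section Aux
variable {n : ℕ}

lemma hw_deriv (B : ℝ) (y : EuclideanSpace ℝ (Fin n)) :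
    HasFDerivAt (fun z : EuclideanSpace ℝ (Fin n) => B + ‖z‖^2) ((2:ℕ) • innerSL ℝ y) y := by
  simpa using (hasFDerivAt_id y).norm_sq.const_add B

lemma hginv_deriv {B : ℝ} (hB : 0 < B) (y : EuclideanSpace ℝ (Fin n)) :
    HasFDerivAt (fun z : EuclideanSpace ℝ (Fin n) => (B + ‖z‖^2)⁻¹)
      (-((B + ‖y‖^2)^2)⁻¹ • ((2:ℕ) • innerSL ℝ y)) y :=
  by
  have h := (hasDerivAt_inv (x := B + ‖y‖^2) (by positivity)).comp_hasFDerivAt y (hw_deriv B y)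
  simpa [smul_smul, Function.comp_def] using h

lemma hv_deriv {B : ℝ} (hB : 0 < B) {Ψ : EuclideanSpace ℝ (Fin n) → ℝ}
    (hΨ : ContDiff ℝ 2 Ψ) (y : EuclideanSpace ℝ (Fin n)) :
    HasFDerivAt (fun z => Ψ z / (B + ‖z‖^2))
      (Ψ y • (-((B + ‖y‖^2)^2)⁻¹ • ((2:ℕ) • innerSL ℝ y)) + (B + ‖y‖^2)⁻¹ • fderiv ℝ Ψ y) y := by
  simp only [div_eq_mul_inv]
  exact ((hΨ.differentiable (by norm_num) y).hasFDerivAt).mul (hginv_deriv hB y)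

lemma fderiv_v_apply {B : ℝ} (hB : 0 < B) {Ψ : EuclideanSpace ℝ (Fin n) → ℝ}
    (hΨ : ContDiff ℝ 2 Ψ) (y : EuclideanSpace ℝ (Fin n)) (j : Fin n) :
    fderiv ℝ (fun z => Ψ z / (B + ‖z‖^2)) y (stdBasis n j)
      = (B + ‖y‖^2)⁻¹ * fderiv ℝ Ψ y (stdBasis n j)
        - 2 * y j * Ψ y * ((B + ‖y‖^2)^2)⁻¹ := by
  rw [(hv_deriv hB hΨ y).fderiv]
  simp [stdBasis, EuclideanSpace.inner_single_right, smul_smul]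
  ring

lemma p_contDiff {Ψ : EuclideanSpace ℝ (Fin n) → ℝ} (hΨ : ContDiff ℝ 2 Ψ) (i : Fin n) :
    ContDiff ℝ 1 (fun y => fderiv ℝ Ψ y (stdBasis n i)) :=
  (hΨ.fderiv_right (by norm_num)).clm_apply contDiff_const

set_option maxHeartbeats 1000000 in
lemma key2 {B : ℝ} (hB : 0 < B) {Ψ : EuclideanSpace ℝ (Fin n) → ℝ}
    (hΨ : ContDiff ℝ 2 Ψ) (x : EuclideanSpace ℝ (Fin n)) (i j : Fin n) :
    fderiv ℝ (fun y => fderiv ℝ (fun z => Ψ z / (B + ‖z‖^2)) y (stdBasis n i)) x (stdBasis n j)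
      = -2 * x j * ((B + ‖x‖^2)^2)⁻¹ * fderiv ℝ Ψ x (stdBasis n i)
        + (B + ‖x‖^2)⁻¹ * fderiv ℝ (fun y => fderiv ℝ Ψ y (stdBasis n i)) x (stdBasis n j)
        - (2 * (if i = j then (1:ℝ) else 0) * Ψ x * ((B + ‖x‖^2)^2)⁻¹
           + 2 * x i * fderiv ℝ Ψ x (stdBasis n j) * ((B + ‖x‖^2)^2)⁻¹
           - 8 * x i * x j * Ψ x * ((B + ‖x‖^2)^3)⁻¹) := by
  have hwne : ∀ y : EuclideanSpace ℝ (Fin n), (B + ‖y‖^2) ≠ 0 := fun y => by positivity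
  have hfun : (fun y => fderiv ℝ (fun z => Ψ z / (B + ‖z‖^2)) y (stdBasis n i))
      = fun y => (B + ‖y‖^2)⁻¹ * fderiv ℝ Ψ y (stdBasis n i)
        - 2 * y i * Ψ y * ((B + ‖y‖^2)^2)⁻¹ :=
    funext fun y => fderiv_v_apply hB hΨ y i
  rw [hfun]
  have hp : HasFDerivAt (fun y => fderiv ℝ Ψ y (stdBasis n i))
      (fderiv ℝ (fun y => fderiv ℝ Ψ y (stdBasis n i)) x) x :=
    ((p_contDiff hΨ i).differentiable one_ne_zero x).hasFDerivAt
  have h1 := (hginv_deriv hB x).mul hp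
  have ha : HasFDerivAt (fun y : EuclideanSpace ℝ (Fin n) => 2 * y i)
      ((2:ℝ) • (EuclideanSpace.proj (𝕜 := ℝ) i)) x :=
    (EuclideanSpace.proj (𝕜 := ℝ) i).hasFDerivAt.const_mul 2
  have hb : HasFDerivAt Ψ (fderiv ℝ Ψ x) x :=
    (hΨ.differentiable (by norm_num) x).hasFDerivAt
  have hcin : HasDerivAt (fun t : ℝ => (t^2)⁻¹)
      (-(2 * (B + ‖x‖^2)) / ((B + ‖x‖^2)^2)^2) (B + ‖x‖^2) := by
    simpa [Pi.inv_def] using (hasDerivAt_pow 2 (B + ‖x‖^2)).inv (by positivity)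
  have hc := hcin.comp_hasFDerivAt x (hw_deriv B x)
  have h2 := (ha.mul hb).mul hc
  simp only [Function.comp_def] at h2
  have h := h1.sub h2
  simp only [Pi.mul_def, Pi.sub_def] at h
  rw [h.fderiv]
  have hsingle : ∀ k l : Fin n, (EuclideanSpace.proj (𝕜 := ℝ) k) (stdBasis n l)
      = if k = l then (1:ℝ) else 0 := by
    intro k l; simp [stdBasis, EuclideanSpace.single_apply]
  simp only [ContinuousLinearMap.sub_apply, ContinuousLinearMap.add_apply,
    ContinuousLinearMap.smul_apply, ContinuousLinearMap.coe_smul', Pi.smul_apply,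
    hsingle, smul_eq_mul]
  have hinner : (innerSL ℝ x) (stdBasis n j) = x j := by
    simp [stdBasis, EuclideanSpace.inner_single_right]
  simp only [hinner]
  have hwx : (B + ‖x‖^2) ≠ 0 := hwne x
  rcases eq_or_ne i j with hij | hij
  · subst hij; simp only [if_pos rfl]; field_simp; ring
  · simp only [if_neg hij]; field_simp; ring

lemma norm_sq_eq_sum (x : EuclideanSpace ℝ (Fin n)) : ∑ i, x i ^ 2 = ‖x‖^2 := by
  rw [EuclideanSpace.norm_eq, Real.sq_sqrt (by positivity)]
  simp [Real.norm_eq_abs, sq_abs]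

lemma gradDot_v {B : ℝ} (hB : 0 < B) {Ψ : EuclideanSpace ℝ (Fin n) → ℝ}
    (hΨ : ContDiff ℝ 2 Ψ) (x : EuclideanSpace ℝ (Fin n)) :
    gradDot n (fun z => Ψ z / (B + ‖z‖^2)) x
      = (B + ‖x‖^2)⁻¹ * gradDot n Ψ x
        - 2 * ‖x‖^2 * Ψ x * ((B + ‖x‖^2)^2)⁻¹ := by
  unfold gradDot
  rw [Finset.sum_congr rfl (fun i _ => by rw [fderiv_v_apply hB hΨ x i])]
  have : ∀ i ∈ Finset.univ, x i * ((B + ‖x‖^2)⁻¹ * fderiv ℝ Ψ x (stdBasis n i)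
        - 2 * x i * Ψ x * ((B + ‖x‖^2)^2)⁻¹)
      = (B + ‖x‖^2)⁻¹ * (x i * fderiv ℝ Ψ x (stdBasis n i))
        - (2 * Ψ x * ((B + ‖x‖^2)^2)⁻¹) * (x i ^ 2) := fun i _ => by ring
  rw [Finset.sum_congr rfl this, Finset.sum_sub_distrib, ← Finset.mul_sum, ← Finset.mul_sum,
    norm_sq_eq_sum]
  ring

lemma lap_v {B : ℝ} (hB : 0 < B) {Ψ : EuclideanSpace ℝ (Fin n) → ℝ}
    (hΨ : ContDiff ℝ 2 Ψ) (x : EuclideanSpace ℝ (Fin n)) :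
    lap n (fun z => Ψ z / (B + ‖z‖^2)) x
      = (B + ‖x‖^2)⁻¹ * lap n Ψ x
        - 4 * ((B + ‖x‖^2)^2)⁻¹ * gradDot n Ψ x
        - 2 * n * Ψ x * ((B + ‖x‖^2)^2)⁻¹
        + 8 * ‖x‖^2 * Ψ x * ((B + ‖x‖^2)^3)⁻¹ := by
  unfold lap
  rw [Finset.sum_congr rfl (fun i _ => by rw [key2 hB hΨ x i i])]
  have : ∀ i ∈ Finset.univ,
      (-2 * x i * ((B + ‖x‖^2)^2)⁻¹ * fderiv ℝ Ψ x (stdBasis n i)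
        + (B + ‖x‖^2)⁻¹ * fderiv ℝ (fun y => fderiv ℝ Ψ y (stdBasis n i)) x (stdBasis n i)
        - (2 * (if i = i then (1:ℝ) else 0) * Ψ x * ((B + ‖x‖^2)^2)⁻¹
           + 2 * x i * fderiv ℝ Ψ x (stdBasis n i) * ((B + ‖x‖^2)^2)⁻¹
           - 8 * x i * x i * Ψ x * ((B + ‖x‖^2)^3)⁻¹))
      = ((B + ‖x‖^2)⁻¹ * fderiv ℝ (fun y => fderiv ℝ Ψ y (stdBasis n i)) x (stdBasis n i)
          - (4 * ((B + ‖x‖^2)^2)⁻¹) * (x i * fderiv ℝ Ψ x (stdBasis n i)))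
        + ((8 * Ψ x * ((B + ‖x‖^2)^3)⁻¹) * (x i ^ 2)
          - 2 * Ψ x * ((B + ‖x‖^2)^2)⁻¹) := fun i _ => by
    simp only [eq_self_iff_true, if_true]; ring
  rw [Finset.sum_congr rfl this, Finset.sum_add_distrib, Finset.sum_sub_distrib,
    Finset.sum_sub_distrib, ← Finset.mul_sum, ← Finset.mul_sum, ← Finset.mul_sum,
    norm_sq_eq_sum, Finset.sum_const, Finset.card_univ, Fintype.card_fin]
  unfold gradDot
  push_cast
  ring

end Aux

/-- **Intertwining of `L` with `H`** : for `v = Ψ/(B+|x|²)` one has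
`(Lv)(x) = (B+|x|²)^{-1} [(B+|x|²)ΔΨ - (2/(1-m)) x·∇Ψ]`. -/
theorem statement15
    (n : ℕ) (hn : 1 ≤ n) (m : ℝ) (hm : m ∈ Set.Ioo (0 : ℝ) 1) (B : ℝ) (hB : 0 < B)
    (Ψ : EuclideanSpace ℝ (Fin n) → ℝ) (hΨ : ContDiff ℝ 2 Ψ)
    (x : EuclideanSpace ℝ (Fin n)) :
    Lop n m B (fun z => Ψ z / (B + ‖z‖ ^ 2)) x =
      (B + ‖x‖ ^ 2)⁻¹ *
        ((B + ‖x‖ ^ 2) * lap n Ψ x - (2 / (1 - m)) * gradDot n Ψ x) := by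
  obtain ⟨hm0, hm1⟩ := hm
  have hwx : (B + ‖x‖^2) ≠ 0 := by positivity
  have h1m : (1:ℝ) - m ≠ 0 := by linarith
  unfold Lop
  rw [lap_v hB hΨ x, gradDot_v hB hΨ x]
  beta_reduce
  field_simp
  ring
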